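/- The maps I01 and I10 satisfy the identities I01∘d0 − d1∘I01 = (−x0 + x1 + x2 − x3)·s01 and I10∘d1 − d0∘I10 = (x0 − x1 − x2 + x3)·s10. -/

import Mathlib

noncomputable section

/-- The base ring `R = ℤ[x0, x1, x2, x3]`. -/
abbrev RR : Type := MvPolynomial (Fin 4) ℤ

def x0 : RR := MvPolynomial.X 0
def x1 : RR := MvPolynomial.X 1
def x2 : RR := MvPolynomial.X 2
def x3 : RR := MvPolynomial.X 3

/-- `θ = x1 − x2 + x3 − x0`. -/
def th : RR := x1 - x2 + x3 - x0

/-- The potential `w = (x0 − x2)·(x1 − x3)·θ`. -/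
def ww : RR := (x0 - x2) * (x1 - x3) * th

/-- The `R`-linear map on `R × R` sending `(x, y) ↦ (p·y, q·x)`; with respect to the
basis `u = (1,0)`, `v = (0,1)` it sends `u ↦ q·v` and `v ↦ p·u`. -/
def od (p q : RR) : (RR × RR) →ₗ[RR] (RR × RR) :=
  LinearMap.prod (p • LinearMap.snd RR RR RR) (q • LinearMap.fst RR RR RR)

/-- The differential of `C(D0)`: `d0 u0 = (x0 − x2)·v0`, `d0 v0 = (x1 − x3)·θ·u0`. -/
def d0 : (RR × RR) →ₗ[RR] (RR × RR) := od ((x1 - x3) * th) (x0 - x2)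

/-- The differential of `C(D1)`: `d1 u1 = (x1 − x3)·v1`, `d1 v1 = (x0 − x2)·θ·u1`. -/
def d1 : (RR × RR) →ₗ[RR] (RR × RR) := od ((x0 - x2) * th) (x1 - x3)

/-- The saddle map `s01 : C(D0) → C(D1)`: `s01 u0 = −v1`, `s01 v0 = θ·u1`. -/
def s01 : (RR × RR) →ₗ[RR] (RR × RR) := od th (-1)

/-- The saddle map `s10 : C(D1) → C(D0)`: `s10 u1 = −v0`, `s10 v1 = θ·u0`. -/
def s10 : (RR × RR) →ₗ[RR] (RR × RR) := od th (-1)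

/-- The map `I01 : C(D0) → C(D1)`: `I01 u0 = u1`, `I01 v0 = v1`. -/
def I01 : (RR × RR) →ₗ[RR] (RR × RR) := LinearMap.id

/-- The map `I10 : C(D1) → C(D0)`: `I10 u1 = u0`, `I10 v1 = v0`. -/
def I10 : (RR × RR) →ₗ[RR] (RR × RR) := LinearMap.id

/-- `I01 ∘ d0 − d1 ∘ I01 = (−x0 + x1 + x2 − x3) • s01` and
`I10 ∘ d1 − d0 ∘ I10 = (x0 − x1 − x2 + x3) • s10`. -/
theorem stmt_6 :
    I01 ∘ₗ d0 - d1 ∘ₗ I01 = (-x0 + x1 + x2 - x3) • s01 ∧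
    I10 ∘ₗ d1 - d0 ∘ₗ I10 = (x0 - x1 - x2 + x3) • s10 := by
  constructor <;>
  · apply LinearMap.ext
    rintro ⟨a, b⟩
    simp only [I01, I10, d0, d1, s01, s10, od, th, LinearMap.comp_apply,
      LinearMap.sub_apply, LinearMap.smul_apply, LinearMap.prod_apply,
      LinearMap.id_apply, LinearMap.smul_apply, LinearMap.fst_apply,
      LinearMap.snd_apply, Function.prod, Prod.smul_mk, Prod.mk_sub_mk, smul_eq_mul]
    rw [Prod.mk.injEq]
    constructor <;> ring

end
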